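/- Let γ > 0 and δ be real numbers. If some derivation of the Lie algebra rh₃ = h₃ × ℝ has characteristic polynomial X(X − γ)·(X² − 2δX + (δ² + 1)), then δ = 0 or γ = 2δ. -/

import Mathlib

set_option linter.unusedTactic false
set_option linter.unnecessarySeqFocus false
set_option linter.unreachableTactic false

open Polynomial

/-- The 3-dimensional Heisenberg Lie algebra `h₃`: the real vector space `Fin 3 → ℝ`
with basis `e₁, e₂, e₃` and only nonzero bracket `⁅e₁, e₂⁆ = e₃`. -/
def H3 : Type := Fin 3 → ℝ

noncomputable instance : AddCommGroup H3 := Pi.addCommGroup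
noncomputable instance : Module ℝ H3 := Pi.module _ _ _
instance : FiniteDimensional ℝ H3 := inferInstanceAs (FiniteDimensional ℝ (Fin 3 → ℝ))

lemma H3.add_apply (x y : H3) (i : Fin 3) : (x + y) i = x i + y i := rfl
lemma H3.smul_apply (r : ℝ) (x : H3) (i : Fin 3) : (r • x) i = r * x i := rfl

noncomputable instance : LieRing H3 :=
  { (inferInstance : AddCommGroup H3) with
    bracket := fun x y => ![0, 0, x 0 * y 1 - x 1 * y 0]
    add_lie := by
      intro x y z
      show (![_,_,_] : Fin 3 → ℝ) = ![_,_,_] + ![_,_,_]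
      funext i
      fin_cases i <;> simp [H3.add_apply] <;> erw [H3.add_apply] <;> simp <;> ring
    lie_add := by
      intro x y z
      show (![_,_,_] : Fin 3 → ℝ) = ![_,_,_] + ![_,_,_]
      funext i
      fin_cases i <;> simp [H3.add_apply] <;> erw [H3.add_apply] <;> simp <;> ring
    lie_self := by
      intro x
      show (![_,_,_] : Fin 3 → ℝ) = 0
      funext i
      fin_cases i <;> simp <;> ring
    leibniz_lie := by
      intro x y z
      show (![_,_,_] : Fin 3 → ℝ) = ![_,_,_] + ![_,_,_]
      funext i
      fin_cases i <;> simp [H3.add_apply] <;> erw [H3.add_apply] <;> simp <;> ring }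

noncomputable instance : LieAlgebra ℝ H3 :=
  { lie_smul := by
      intro r x y
      show (![_,_,_] : Fin 3 → ℝ) = r • ![_,_,_]
      funext i
      fin_cases i <;> simp [H3.smul_apply] <;> erw [H3.smul_apply] <;> simp <;> ring }

/-- `rh₃ := h₃ × ℝ`, the product Lie algebra of the Heisenberg Lie algebra `h₃` with the
1-dimensional abelian Lie algebra `ℝ`. -/
def RH3 : Type := H3 × ℝ

noncomputable instance : AddCommGroup RH3 := inferInstanceAs (AddCommGroup (H3 × ℝ))
noncomputable instance : Module ℝ RH3 := inferInstanceAs (Module ℝ (H3 × ℝ))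
instance : FiniteDimensional ℝ RH3 := inferInstanceAs (FiniteDimensional ℝ (H3 × ℝ))

noncomputable instance : LieRing RH3 :=
  { (inferInstance : AddCommGroup RH3) with
    bracket := fun x y => (⁅x.1, y.1⁆, 0)
    add_lie := by
      intro x y z
      show (⁅x.1 + y.1, z.1⁆, (0:ℝ)) = (⁅x.1, z.1⁆ + ⁅y.1, z.1⁆, 0 + 0)
      simp [add_lie]
    lie_add := by
      intro x y z
      show (⁅x.1, y.1 + z.1⁆, (0:ℝ)) = (⁅x.1, y.1⁆ + ⁅x.1, z.1⁆, 0 + 0)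
      simp [lie_add]
    lie_self := by
      intro x
      show (⁅x.1, x.1⁆, (0:ℝ)) = (0, 0)
      simp
    leibniz_lie := by
      intro x y z
      show (⁅x.1, ⁅y.1, z.1⁆⁆, (0:ℝ)) = (⁅⁅x.1, y.1⁆, z.1⁆ + ⁅y.1, ⁅x.1, z.1⁆⁆, 0 + 0)
      rw [← leibniz_lie]
      simp }

noncomputable instance : LieAlgebra ℝ RH3 :=
  { lie_smul := by
      intro r x y
      show (⁅x.1, r • y.1⁆, (0:ℝ)) = (r • ⁅x.1, y.1⁆, r • (0:ℝ))
      simp }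


section Aux

/-- Coordinate linear equivalence `RH3 ≃ (Fin 4 → ℝ)`. -/
noncomputable def eRH3 : RH3 ≃ₗ[ℝ] (Fin 4 → ℝ) where
  toFun x := ![x.1 0, x.1 1, x.1 2, x.2]
  invFun y := (![y 0, y 1, y 2], y 3)
  map_add' x y := by funext i; fin_cases i <;> rfl
  map_smul' r x := by funext i; fin_cases i <;> rfl
  left_inv x := by
    refine Prod.ext ?_ rfl
    funext i; fin_cases i <;> rfl
  right_inv y := by funext i; fin_cases i <;> rfl

lemma eRH3_apply (x : RH3) : eRH3 x = ![x.1 0, x.1 1, x.1 2, x.2] := rfl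

lemma H3.zero_apply (i : Fin 3) : (0 : H3) i = 0 := rfl

lemma RH3.add_def (x y : RH3) : x + y = (x.1 + y.1, x.2 + y.2) := rfl
lemma RH3.smul_def (c : ℝ) (x : RH3) : c • x = (c • x.1, c * x.2) := rfl
lemma RH3.zero_def : (0 : RH3) = ((0 : H3), (0 : ℝ)) := rfl

lemma RH3.bracket_def (x y : RH3) :
    ⁅x, y⁆ = ((![0, 0, x.1 0 * y.1 1 - x.1 1 * y.1 0] : H3), (0:ℝ)) := rfl

lemma arith_key (γ δ t s q : ℝ) (hγ : 0 < γ)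
    (He : ∀ z : ℝ, z * (z - γ) * (z ^ 2 - 2 * δ * z + (δ ^ 2 + 1))
      = (z ^ 2 - t * z + q) * (z - t) * (z - s)) :
    δ = 0 ∨ γ = 2 * δ := by
  have hquad : ∀ z : ℝ, 0 < z ^ 2 - 2 * δ * z + (δ ^ 2 + 1) := by
    intro z
    have : z ^ 2 - 2 * δ * z + (δ ^ 2 + 1) = (z - δ) ^ 2 + 1 := by ring
    rw [this]; positivity
  have ht : t = 0 ∨ t = γ := by
    have h0 := He t
    have h1 : t * (t - γ) * (t ^ 2 - 2 * δ * t + (δ ^ 2 + 1)) = 0 := by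
      rw [h0]; ring
    rcases mul_eq_zero.1 h1 with h2 | h2
    · rcases mul_eq_zero.1 h2 with h3 | h3
      · exact Or.inl h3
      · exact Or.inr (by linarith)
    · exact absurd h2 (ne_of_gt (hquad t))
  have hs : s = 0 ∨ s = γ := by
    have h0 := He s
    have h1 : s * (s - γ) * (s ^ 2 - 2 * δ * s + (δ ^ 2 + 1)) = 0 := by
      rw [h0]; ring
    rcases mul_eq_zero.1 h1 with h2 | h2
    · rcases mul_eq_zero.1 h2 with h3 | h3
      · exact Or.inl h3
      · exact Or.inr (by linarith)
    · exact absurd h2 (ne_of_gt (hquad s))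
  rcases ht with ht | ht <;> rcases hs with hs | hs
  · -- t = 0, s = 0 : contradiction
    exfalso
    have e1 := He 1; have e2 := He (-1); have e3 := He 2; have e4 := He (-2)
    rw [ht, hs] at e1 e2 e3 e4
    nlinarith [mul_pos hγ (by positivity : (0:ℝ) < 1 + δ ^ 2), sq_nonneg δ]
  · -- t = 0, s = γ : δ = 0
    left
    have e1 := He (-1); have e2 := He (-2)
    rw [ht, hs] at e1 e2
    have h1 : (1 + γ) * ((2 + 2 * δ + δ ^ 2) - (1 + q)) = 0 := by linarith [e1]; 
    have h2 : (2 + γ) * ((5 + 4 * δ + δ ^ 2) - (4 + q)) = 0 := by nlinarith [e2]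
    have hg1 : (1 + γ) ≠ 0 := by positivity
    have hg2 : (2 + γ) ≠ 0 := by positivity
    have h1' := (mul_eq_zero.1 h1).resolve_left hg1
    have h2' := (mul_eq_zero.1 h2).resolve_left hg2
    linarith
  · -- t = γ, s = 0 : γ = 2δ
    right
    have e1 := He (-1); have e2 := He (-2)
    rw [ht, hs] at e1 e2
    have h1 : (1 + γ) * ((2 + 2 * δ + δ ^ 2) - (1 + γ + q)) = 0 := by nlinarith [e1]
    have h2 : (2 + γ) * ((5 + 4 * δ + δ ^ 2) - (4 + 2 * γ + q)) = 0 := by nlinarith [e2]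
    have hg1 : (1 + γ) ≠ 0 := by positivity
    have hg2 : (2 + γ) ≠ 0 := by positivity
    have h1' := (mul_eq_zero.1 h1).resolve_left hg1
    have h2' := (mul_eq_zero.1 h2).resolve_left hg2
    linarith
  · -- t = γ, s = γ : contradiction
    exfalso
    have e1 := He (γ + 1); have e2 := He (γ - 1); have e3 := He (γ + 2); have e4 := He (γ - 2)
    rw [ht, hs] at e1 e2 e3 e4
    nlinarith [mul_pos hγ (by positivity : (0:ℝ) < 1 + (γ - δ) ^ 2),
      mul_nonneg hγ.le (sq_nonneg (γ - δ)), sq_nonneg (γ - δ)]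

end Aux

/-- If `γ > 0` and some derivation of `rh₃ = h₃ × ℝ` has characteristic polynomial
`X * (X - γ) * (X² - 2δX + (δ² + 1))`, then `δ = 0` or `γ = 2δ`. -/
theorem charpoly_derivation_rh3_r4_gamma_delta (γ δ : ℝ) (hγ : 0 < γ)
    (h : ∃ D : LieDerivation ℝ RH3 RH3,
      LinearMap.charpoly D.toLinearMap
        = X * (X - C γ) * (X ^ 2 - C (2 * δ) * X + C (δ ^ 2 + 1))) :
    δ = 0 ∨ γ = 2 * δ := by
  classical
  obtain ⟨D, h⟩ := h
  set B : Module.Basis (Fin 4) ℝ RH3 := Module.Basis.ofEquivFun eRH3 with hBdef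
  set M : Matrix (Fin 4) (Fin 4) ℝ := LinearMap.toMatrix B B D.toLinearMap with hMdef
  have hDf : ∀ x : RH3, D.toLinearMap x = D x := fun _ => rfl
  have hMa : ∀ i j, M i j = eRH3 (D (B j)) i := by
    intro i j
    rw [hMdef, LinearMap.toMatrix_apply, hBdef, Module.Basis.ofEquivFun_repr_apply, hDf]
  have hB0 : B 0 = ((![1,0,0] : H3), (0:ℝ)) := by
    apply eRH3.injective
    have : eRH3 (B 0) = Pi.single (0 : Fin 4) 1 := by
      funext i
      rw [← Module.Basis.ofEquivFun_repr_apply, ← hBdef, Module.Basis.repr_self]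
      simp [Finsupp.single_apply, Pi.single_apply, eq_comm]
    rw [this]; funext i; fin_cases i <;> simp [eRH3_apply, Pi.single_apply] <;> rfl
  have hB1 : B 1 = ((![0,1,0] : H3), (0:ℝ)) := by
    apply eRH3.injective
    have : eRH3 (B 1) = Pi.single (1 : Fin 4) 1 := by
      funext i
      rw [← Module.Basis.ofEquivFun_repr_apply, ← hBdef, Module.Basis.repr_self]
      simp [Finsupp.single_apply, Pi.single_apply, eq_comm]
    rw [this]; funext i; fin_cases i <;> simp [eRH3_apply, Pi.single_apply] <;> rfl
  have hB2 : B 2 = ((![0,0,1] : H3), (0:ℝ)) := by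
    apply eRH3.injective
    have : eRH3 (B 2) = Pi.single (2 : Fin 4) 1 := by
      funext i
      rw [← Module.Basis.ofEquivFun_repr_apply, ← hBdef, Module.Basis.repr_self]
      simp [Finsupp.single_apply, Pi.single_apply, eq_comm]
    rw [this]; funext i; fin_cases i <;> simp [eRH3_apply, Pi.single_apply] <;> rfl
  have hB3 : B 3 = ((![0,0,0] : H3), (1:ℝ)) := by
    apply eRH3.injective
    have : eRH3 (B 3) = Pi.single (3 : Fin 4) 1 := by
      funext i
      rw [← Module.Basis.ofEquivFun_repr_apply, ← hBdef, Module.Basis.repr_self]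
      simp [Finsupp.single_apply, Pi.single_apply, eq_comm]
    rw [this]; funext i; fin_cases i <;> simp [eRH3_apply, Pi.single_apply] <;> rfl
  -- the bracket relations
  have hbr : (⁅B 0, B 1⁆ : RH3) = B 2 := by
    erw [hB0, hB1, hB2, RH3.bracket_def]
    refine Prod.ext (funext fun i => ?_) rfl
    fin_cases i <;> simp
  have hbr03 : (⁅B 0, B 3⁆ : RH3) = 0 := by
    erw [hB0, hB3, RH3.bracket_def]
    refine Prod.ext (funext fun i => ?_) rfl
    fin_cases i <;> simp <;> rfl
  have hbr13 : (⁅B 1, B 3⁆ : RH3) = 0 := by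
    erw [hB1, hB3, RH3.bracket_def]
    refine Prod.ext (funext fun i => ?_) rfl
    fin_cases i <;> simp <;> rfl
  -- derivation facts
  have hD2 : D (B 2) = ((D (B 0)).1 0 + (D (B 1)).1 1) • B 2 := by
    have h1 : D (B 2) = ⁅B 0, D (B 1)⁆ + ⁅D (B 0), B 1⁆ := by
      conv_lhs => rw [← hbr]
      exact D.apply_lie_eq_add _ _
    erw [h1, RH3.bracket_def, RH3.bracket_def, RH3.add_def, RH3.smul_def, hB0, hB1, hB2]
    refine Prod.ext (funext fun i => ?_) (by norm_num)
    fin_cases i <;> simp [H3.add_apply, H3.smul_apply] <;> erw [H3.add_apply, H3.smul_apply] <;> simp <;> ring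
  have hD30 : (D (B 3)).1 0 = 0 := by
    have h0 : (⁅B 1, D (B 3)⁆ : RH3) + ⁅D (B 1), B 3⁆ = 0 := by
      rw [← D.apply_lie_eq_add, hbr13, map_zero]
    have h2 := congrArg (fun x : RH3 => x.1 2) h0
    simp only [RH3.bracket_def, RH3.add_def, RH3.zero_def] at h2; simp only [hB1, hB3] at h2
    simp [H3.add_apply, H3.zero_apply] at h2
    erw [RH3.add_def] at h2; simp at h2; erw [H3.add_apply] at h2; simp at h2
    rw [hB3]
    linarith
  have hD31 : (D (B 3)).1 1 = 0 := by
    have h0 : (⁅B 0, D (B 3)⁆ : RH3) + ⁅D (B 0), B 3⁆ = 0 := by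
      rw [← D.apply_lie_eq_add, hbr03, map_zero]
    have h2 := congrArg (fun x : RH3 => x.1 2) h0
    simp only [RH3.bracket_def, RH3.add_def, RH3.zero_def] at h2; simp only [hB0, hB3] at h2
    simp [H3.add_apply, H3.zero_apply] at h2
    erw [RH3.add_def] at h2; simp at h2; erw [H3.add_apply] at h2; simp at h2
    rw [hB3]
    linarith
  -- matrix entries
  have hM00 : M 0 0 = (D (B 0)).1 0 := by rw [hMa, eRH3_apply]; rfl
  have hM11 : M 1 1 = (D (B 1)).1 1 := by rw [hMa, eRH3_apply]; rfl
  have hcol2 : ∀ i, M i 2 = (M 0 0 + M 1 1) * eRH3 (B 2) i := by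
    intro i
    rw [hMa, hD2, map_smul, hM00, hM11]
    rfl
  have hB2e : eRH3 (B 2) = ![0, 0, 1, 0] := by
    rw [hB2]; funext i; fin_cases i <;> simp [eRH3_apply] <;> rfl
  have hM02 : M 0 2 = 0 := by rw [hcol2, hB2e]; simp
  have hM12 : M 1 2 = 0 := by rw [hcol2, hB2e]; simp
  have hM22 : M 2 2 = M 0 0 + M 1 1 := by rw [hcol2, hB2e]; simp
  have hM32 : M 3 2 = 0 := by rw [hcol2, hB2e]; simp
  have hM03 : M 0 3 = 0 := by rw [hMa, eRH3_apply]; exact hD30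
  have hM13 : M 1 3 = 0 := by rw [hMa, eRH3_apply]; exact hD31
  -- charpoly computation
  have hchar : Matrix.charmatrix M =
      !![X - C (M 0 0), -C (M 0 1), 0, 0;
         -C (M 1 0), X - C (M 1 1), 0, 0;
         -C (M 2 0), -C (M 2 1), X - C (M 0 0 + M 1 1), -C (M 2 3);
         -C (M 3 0), -C (M 3 1), 0, X - C (M 3 3)] := by
    refine Matrix.ext fun i j => ?_
    fin_cases i <;> fin_cases j <;>
      simp [Matrix.charmatrix_apply, Matrix.diagonal_apply, hM02, hM12, hM22, hM32, hM03,
        hM13]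
  have hcp : M.charpoly =
      (X ^ 2 - C (M 0 0 + M 1 1) * X + C (M 0 0 * M 1 1 - M 0 1 * M 1 0))
        * (X - C (M 0 0 + M 1 1)) * (X - C (M 3 3)) := by
    clear_value M
    rw [show M.charpoly = (Matrix.charmatrix M).det from rfl, hchar,
      Matrix.det_succ_row_zero]
    simp only [Fin.sum_univ_succ, Matrix.det_fin_three, Matrix.submatrix_apply]
    simp [Fin.succAbove,
      Fin.lt_def, map_add, map_mul, map_sub]
    ring
  have hkey : X * (X - C γ) * (X ^ 2 - C (2 * δ) * X + C (δ ^ 2 + 1))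
      = (X ^ 2 - C (M 0 0 + M 1 1) * X + C (M 0 0 * M 1 1 - M 0 1 * M 1 0))
        * (X - C (M 0 0 + M 1 1)) * (X - C (M 3 3)) := by
    rw [← h, ← hcp, hMdef, LinearMap.charpoly_toMatrix]
  have He : ∀ z : ℝ, z * (z - γ) * (z ^ 2 - 2 * δ * z + (δ ^ 2 + 1))
      = (z ^ 2 - (M 0 0 + M 1 1) * z + (M 0 0 * M 1 1 - M 0 1 * M 1 0))
        * (z - (M 0 0 + M 1 1)) * (z - M 3 3) := by
    intro z
    have h' := congrArg (Polynomial.eval z) hkey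
    simpa using h'
  exact arith_key γ δ (M 0 0 + M 1 1) (M 3 3) (M 0 0 * M 1 1 - M 0 1 * M 1 0) hγ He
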